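/- Type-4 spectrum of a generalized coverage function: if s_A = c + w(⋃_{i∈A} S_i) with additive weight w, then for every nonempty B ⊆ N, the type-4 DSFT ŝ_B = Σ_{A⊆N, A∪B=N} (−1)^{|A∩B|} s_A equals −w(⋂_{i∈B} S_i \ ⋃_{i∉B} S_i), and ŝ_∅ = s_N. -/

import Mathlib

open Finset

def dsft4 {N : Type*} [Fintype N] [DecidableEq N] (s : Finset N → ℝ) (B : Finset N) : ℝ :=
  ∑ A ∈ (univ : Finset N).powerset.filter (fun A => A ∪ B = univ),
    (-1 : ℝ) ^ (A ∩ B).card * s A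

lemma sum_powerset_neg_one_pow_card_real {N : Type*} [DecidableEq N] (s : Finset N) :
    ∑ T ∈ s.powerset, (-1:ℝ)^T.card = if s = ∅ then 1 else 0 := by
  have h := Finset.sum_powerset_neg_one_pow_card (x := s)
  calc ∑ T ∈ s.powerset, (-1:ℝ)^T.card = ((∑ T ∈ s.powerset, (-1:ℤ)^T.card : ℤ) : ℝ) := by
        push_cast; rfl
    _ = _ := by rw [h]; split <;> simp

theorem dsft4_generalized_coverage {N U : Type*} [Fintype N] [DecidableEq N]
    [Fintype U] [DecidableEq U]
    (S : N → Finset U) (w : U → ℝ) (c : ℝ) (s : Finset N → ℝ)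
    (hs : ∀ A : Finset N, s A = c + ∑ u ∈ A.biUnion S, w u) :
    (∀ B : Finset N, B.Nonempty →
      dsft4 s B = -∑ u ∈ B.inf S \ ((univ : Finset N) \ B).biUnion S, w u) ∧
    dsft4 s ∅ = s univ := by
  constructor
  · intro B hB
    have hBne : B ≠ ∅ := hB.ne_empty
    have hrec : ∀ A : Finset N, A ∪ B = univ → (univ \ B) ∪ (A ∩ B) = A := by
      intro A hA
      have h1 : univ \ B ⊆ A := by
        intro x hx
        simp only [mem_sdiff, mem_univ, true_and] at hx
        have : x ∈ A ∪ B := hA ▸ mem_univ x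
        rcases mem_union.1 this with h | h
        · exact h
        · exact absurd h hx
      ext x
      simp only [mem_union, mem_sdiff, mem_univ, true_and, mem_inter]
      constructor
      · rintro (h | ⟨h, _⟩)
        · exact h1 (by simp [h])
        · exact h
      · intro h
        by_cases hx : x ∈ B
        · exact Or.inr ⟨h, hx⟩
        · exact Or.inl hx
    -- reindex the sum over T ⊆ B
    have key : dsft4 s B = ∑ T ∈ B.powerset, (-1:ℝ)^T.card * s ((univ \ B) ∪ T) := by
      unfold dsft4
      refine Finset.sum_bij' (fun A _ => A ∩ B) (fun T _ => (univ \ B) ∪ T) ?_ ?_ ?_ ?_ ?_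
      · intro A hA
        exact mem_powerset.2 inter_subset_right
      · intro T hT
        simp only [mem_powerset] at hT
        simp only [mem_filter, mem_powerset, subset_univ, true_and]
        rw [union_assoc, union_eq_right.2 hT, sdiff_union_of_subset (subset_univ B)]
      · intro A hA
        simp only [mem_filter, mem_powerset] at hA
        exact hrec A hA.2
      · intro T hT
        simp only [mem_powerset] at hT
        ext x
        simp only [mem_inter, mem_union, mem_sdiff, mem_univ, true_and]
        constructor
        · rintro ⟨h | h, hx⟩
          · exact absurd hx h
          · exact h
        · intro h
          exact ⟨Or.inr h, hT h⟩
      · intro A hA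
        simp only [mem_filter, mem_powerset] at hA
        rw [hrec A hA.2]
    rw [key]
    simp only [hs]
    have expand : ∀ T ∈ B.powerset, (-1:ℝ)^T.card * (c + ∑ u ∈ ((univ \ B) ∪ T).biUnion S, w u)
        = (-1:ℝ)^T.card * c + ∑ u ∈ (univ:Finset U),
            (-1:ℝ)^T.card * (if u ∈ ((univ \ B) ∪ T).biUnion S then w u else 0) := by
      intro T _
      rw [← Finset.mul_sum, Finset.sum_ite_mem, univ_inter, mul_add]
    rw [Finset.sum_congr rfl expand, Finset.sum_add_distrib]
    have h0 : ∑ T ∈ B.powerset, (-1:ℝ)^T.card * c = 0 := by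
      rw [← Finset.sum_mul, sum_powerset_neg_one_pow_card_real, if_neg hBne, zero_mul]
    rw [h0, zero_add, Finset.sum_comm]
    rw [← Finset.sum_neg_distrib, show ∑ u ∈ B.inf S \ (univ \ B).biUnion S, -w u
        = ∑ u ∈ (univ:Finset U), (if u ∈ B.inf S \ (univ \ B).biUnion S then -w u else 0) by
      rw [Finset.sum_ite_mem, univ_inter]]
    refine Finset.sum_congr rfl fun u _ => ?_
    by_cases hu : u ∈ (univ \ B).biUnion S
    · have hcov : ∀ T : Finset N, u ∈ ((univ \ B) ∪ T).biUnion S := by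
        intro T
        obtain ⟨i, hi, hui⟩ := mem_biUnion.1 hu
        exact mem_biUnion.2 ⟨i, mem_union_left _ hi, hui⟩
      simp only [hcov, if_true]
      rw [← Finset.sum_mul, sum_powerset_neg_one_pow_card_real, if_neg hBne, zero_mul]
      rw [if_neg (by simp [mem_sdiff, hu])]
    · have hcov : ∀ T : Finset N, (u ∈ ((univ \ B) ∪ T).biUnion S) ↔ u ∈ T.biUnion S := by
        intro T
        constructor
        · intro h
          obtain ⟨i, hi, hui⟩ := mem_biUnion.1 h
          rcases mem_union.1 hi with h' | h'
          · exact absurd (mem_biUnion.2 ⟨i, h', hui⟩) hu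
          · exact mem_biUnion.2 ⟨i, h', hui⟩
        · intro h
          obtain ⟨i, hi, hui⟩ := mem_biUnion.1 h
          exact mem_biUnion.2 ⟨i, mem_union_right _ hi, hui⟩
      simp only [hcov]
      have split : ∀ T : Finset N,
          (-1:ℝ)^T.card * (if u ∈ T.biUnion S then w u else 0)
          = (-1:ℝ)^T.card * w u - (if u ∉ T.biUnion S then (-1:ℝ)^T.card * w u else 0) := by
        intro T
        by_cases h : u ∈ T.biUnion S <;> simp [h]
      rw [Finset.sum_congr rfl (fun T _ => split T), Finset.sum_sub_distrib,
        ← Finset.sum_mul, sum_powerset_neg_one_pow_card_real, if_neg hBne, zero_mul, zero_sub,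
        ← Finset.sum_filter]
      have hfil : B.powerset.filter (fun T => u ∉ T.biUnion S)
          = (B.filter (fun i => u ∉ S i)).powerset := by
        ext T
        simp only [mem_filter, mem_powerset]
        constructor
        · rintro ⟨hT, hTu⟩
          intro i hi
          exact mem_filter.2 ⟨hT hi, fun h => hTu (mem_biUnion.2 ⟨i, hi, h⟩)⟩
        · intro h
          constructor
          · exact h.trans (filter_subset _ _)
          · intro hc
            obtain ⟨i, hi, hui⟩ := mem_biUnion.1 hc
            exact (mem_filter.1 (h hi)).2 hui
      rw [hfil, ← Finset.sum_mul, sum_powerset_neg_one_pow_card_real]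
      have hinf : u ∈ B.inf S \ (univ \ B).biUnion S ↔ B.filter (fun i => u ∉ S i) = ∅ := by
        simp only [mem_sdiff, hu, not_false_iff, and_true, Finset.filter_eq_empty_iff,
          Finset.mem_inf, not_not]
      by_cases h : B.filter (fun i => u ∉ S i) = ∅
      · rw [if_pos h, if_pos (hinf.2 h), one_mul]
      · rw [if_neg h, if_neg (fun hc => h (hinf.1 hc)), zero_mul, neg_zero]
  · unfold dsft4
    have : (univ : Finset N).powerset.filter (fun A => A ∪ ∅ = univ) = {univ} := by
      ext A
      simp [Finset.mem_filter]
    rw [this, Finset.sum_singleton]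
    simp
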